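/- Let Σ_P be symmetric positive definite and Σ̂_P symmetric with (1−γ)Σ_P ⪯ Σ̂_P ⪯ (1+γ)Σ_P for γ ∈ [0, 1/2]. Then for every v ∈ R^d, vᵀ (I − Σ_P^{1/2} Σ̂_P⁻¹ Σ_P^{1/2})² v ≤ 10γ ‖v‖₂². -/

import Mathlib

open Matrix

/-- The square root of a positive semidefinite matrix, as `Matrix.PosSemidef.sqrt` was defined
in the older Mathlib (removed since). -/
noncomputable def Matrix.PosSemidef.sqrt {n : Type*} [Fintype n] [DecidableEq n]
    {A : Matrix n n ℝ} (hA : A.PosSemidef) : Matrix n n ℝ :=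
  (hA.1.eigenvectorUnitary : Matrix n n ℝ) * diagonal ((↑) ∘ (√·) ∘ hA.1.eigenvalues) *
    (star hA.1.eigenvectorUnitary : Matrix n n ℝ)

lemma Matrix.PosSemidef.posSemidef_sqrt {n : Type*} [Fintype n] [DecidableEq n]
    {A : Matrix n n ℝ} (hA : A.PosSemidef) : hA.sqrt.PosSemidef := by
  unfold Matrix.PosSemidef.sqrt
  have h := (PosSemidef.diagonal (R := ℝ) (n := n)
    (d := ((↑) ∘ (√·) ∘ hA.1.eigenvalues : n → ℝ))
    (fun i => by simpa using Real.sqrt_nonneg (hA.1.eigenvalues i))).mul_mul_conjTranspose_same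
    (hA.1.eigenvectorUnitary : Matrix n n ℝ)
  rw [conjTranspose_eq_transpose_of_trivial] at h
  simpa [Matrix.star_eq_conjTranspose] using h

lemma Matrix.PosSemidef.sqrt_mul_self {n : Type*} [Fintype n] [DecidableEq n]
    {A : Matrix n n ℝ} (hA : A.PosSemidef) : hA.sqrt * hA.sqrt = A := by
  let C : Matrix n n ℝ := hA.1.eigenvectorUnitary
  let E := diagonal ((↑) ∘ (√·) ∘ hA.1.eigenvalues : n → ℝ)
  suffices C * (E * (star C * C) * E) * star C = A by
    change C * E * star C * (C * E * star C) = A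
    simpa only [← Matrix.mul_assoc] using this
  have : star C * C = 1 := Unitary.coe_star_mul_self hA.1.eigenvectorUnitary
  rw [this, Matrix.mul_one]
  have : E * E = diagonal ((↑) ∘ hA.1.eigenvalues) := by
    rw [diagonal_mul_diagonal]
    congr 1
    funext v
    simp [Real.mul_self_sqrt (hA.eigenvalues_nonneg v)]
  rw [this]
  conv_rhs => rw [hA.1.spectral_theorem]
  simp [C, Matrix.mul_assoc]
  rfl

section Aux

variable {d : ℕ}

private lemma herm_smul {A : Matrix (Fin d) (Fin d) ℝ} (hA : A.IsHermitian) (c : ℝ) :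
    (c • A).IsHermitian := by
  unfold Matrix.IsHermitian at *
  rw [conjTranspose_smul, hA, star_trivial]

private lemma dot_symm {A : Matrix (Fin d) (Fin d) ℝ} (hA : A.IsHermitian)
    (v w : Fin d → ℝ) : v ⬝ᵥ A *ᵥ w = (A *ᵥ v) ⬝ᵥ w := by
  have hAt : Aᵀ = A := by
    have h := hA
    rwa [Matrix.IsHermitian, conjTranspose_eq_transpose_of_trivial] at h
  rw [dotProduct_mulVec, ← mulVec_transpose, hAt]

private lemma dot_conj {Q T : Matrix (Fin d) (Fin d) ℝ} (hQ : Q.IsHermitian)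
    (v w : Fin d → ℝ) : v ⬝ᵥ (Q * T * Q) *ᵥ w = (Q *ᵥ v) ⬝ᵥ T *ᵥ (Q *ᵥ w) := by
  rw [← mulVec_mulVec, ← mulVec_mulVec, dot_symm hQ]

private lemma psd_form {A : Matrix (Fin d) (Fin d) ℝ} (hA : A.PosSemidef)
    (x : Fin d → ℝ) : 0 ≤ x ⬝ᵥ A *ᵥ x := by
  have := hA.dotProduct_mulVec_nonneg x
  rwa [star_trivial] at this

private lemma pd_form {A : Matrix (Fin d) (Fin d) ℝ} (hA : A.PosDef)
    {x : Fin d → ℝ} (hx : x ≠ 0) : 0 < x ⬝ᵥ A *ᵥ x := by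
  have := hA.dotProduct_mulVec_pos hx
  rwa [star_trivial] at this

private lemma posDef_smul {P : Matrix (Fin d) (Fin d) ℝ} (hP : P.PosDef) {c : ℝ}
    (hc : 0 < c) : (c • P).PosDef := by
  refine PosDef.of_dotProduct_mulVec_pos (herm_smul hP.1 c) (fun x hx => ?_)
  rw [smul_mulVec, dotProduct_smul, smul_eq_mul]
  exact mul_pos hc (hP.dotProduct_mulVec_pos hx)

private lemma sqrt_posDef {P : Matrix (Fin d) (Fin d) ℝ} (hP : P.PosDef) :
    hP.posSemidef.sqrt.PosDef := by
  set S := hP.posSemidef.sqrt with hSdef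
  have hS : S.PosSemidef := hP.posSemidef.posSemidef_sqrt
  refine PosDef.of_dotProduct_mulVec_pos hS.1 (fun x hx => ?_)
  rcases lt_or_eq_of_le (hS.dotProduct_mulVec_nonneg x) with h | h
  · exact h
  · exfalso
    have hSx : S *ᵥ x = 0 := (hS.dotProduct_mulVec_zero_iff x).mp h.symm
    have hPx : P *ᵥ x = 0 := by
      have h2 : (S * S) *ᵥ x = 0 := by rw [← mulVec_mulVec, hSx, mulVec_zero]
      rwa [hP.posSemidef.sqrt_mul_self] at h2
    have h3 := hP.dotProduct_mulVec_pos hx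
    rw [hPx, dotProduct_zero] at h3
    exact lt_irrefl 0 h3

private lemma conj_sqrt_inv {A : Matrix (Fin d) (Fin d) ℝ} (hA : A.PosDef)
    {R : Matrix (Fin d) (Fin d) ℝ} (hR2 : R * R = A⁻¹) (hRu : IsUnit R) :
    R * A * R = 1 := by
  have hdet : IsUnit A.det := (isUnit_iff_isUnit_det A).mp hA.isUnit
  have h1 : A = R⁻¹ * R⁻¹ := by
    rw [← Matrix.mul_inv_rev, hR2, Matrix.nonsing_inv_nonsing_inv _ hdet]
  haveI := hRu.invertible
  rw [h1, ← Matrix.mul_assoc, Matrix.mul_inv_of_invertible, Matrix.one_mul,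
    Matrix.inv_mul_of_invertible]

private lemma posDef_conj {B R : Matrix (Fin d) (Fin d) ℝ} (hB : B.PosDef)
    (hR : R.PosDef) : (R * B * R).PosDef := by
  refine PosDef.of_dotProduct_mulVec_pos ?_ (fun x hx => ?_)
  · have h1 : (R * B * R)ᴴ = Rᴴ * Bᴴ * Rᴴ := by
      rw [conjTranspose_mul, conjTranspose_mul, Matrix.mul_assoc]
    rw [Matrix.IsHermitian, h1, hR.1.eq, hB.1.eq]
  · have hinj : Function.Injective (R.mulVec) :=
      mulVec_injective_iff_isUnit.mpr hR.isUnit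
    have hRx : R *ᵥ x ≠ 0 := by
      intro h0
      exact hx (hinj (by simpa using h0))
    have h2 := pd_form hB hRx
    rw [star_trivial, dot_conj hR.1]
    exact h2

private lemma inv_form_le_one {C : Matrix (Fin d) (Fin d) ℝ} (hC : C.PosDef)
    (h : ∀ x : Fin d → ℝ, x ⬝ᵥ x ≤ x ⬝ᵥ C *ᵥ x) (w : Fin d → ℝ) :
    w ⬝ᵥ C⁻¹ *ᵥ w ≤ w ⬝ᵥ w := by
  have hCi : (C⁻¹).PosDef := hC.inv
  set Q := hCi.posSemidef.sqrt with hQdef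
  have hQpd : Q.PosDef := sqrt_posDef hCi
  have hQ2 : Q * Q = C⁻¹ := hCi.posSemidef.sqrt_mul_self
  have hQCQ : Q * C * Q = 1 := by
    have hdet : IsUnit C.det := (isUnit_iff_isUnit_det C).mp hC.isUnit
    exact conj_sqrt_inv hC hQ2 hQpd.isUnit
  have e1 : w ⬝ᵥ C⁻¹ *ᵥ w = (Q *ᵥ w) ⬝ᵥ (Q *ᵥ w) := by
    rw [← hQ2, ← mulVec_mulVec, dot_symm hQpd.1]
  have e2 := h (Q *ᵥ w)
  rw [← dot_conj hQpd.1, hQCQ, one_mulVec] at e2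
  rw [e1]
  exact e2

private lemma inv_form_mono {A B : Matrix (Fin d) (Fin d) ℝ} (hA : A.PosDef)
    (hB : B.PosDef) (h : (B - A).PosSemidef) (v : Fin d → ℝ) :
    v ⬝ᵥ B⁻¹ *ᵥ v ≤ v ⬝ᵥ A⁻¹ *ᵥ v := by
  set R := hA.inv.posSemidef.sqrt with hRdef
  have hRpd : R.PosDef := sqrt_posDef hA.inv
  have hR2 : R * R = A⁻¹ := hA.inv.posSemidef.sqrt_mul_self
  have hRAR : R * A * R = 1 := conj_sqrt_inv hA hR2 hRpd.isUnit
  have hCpd : (R * B * R).PosDef := posDef_conj hB hRpd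
  have hCge : ∀ x : Fin d → ℝ, x ⬝ᵥ x ≤ x ⬝ᵥ (R * B * R) *ᵥ x := by
    intro x
    have h1 := psd_form h (R *ᵥ x)
    rw [sub_mulVec, dotProduct_sub] at h1
    have h2 : (R *ᵥ x) ⬝ᵥ A *ᵥ (R *ᵥ x) ≤ (R *ᵥ x) ⬝ᵥ B *ᵥ (R *ᵥ x) := by linarith
    calc x ⬝ᵥ x = x ⬝ᵥ (R * A * R) *ᵥ x := by rw [hRAR, one_mulVec]
    _ = (R *ᵥ x) ⬝ᵥ A *ᵥ (R *ᵥ x) := dot_conj hRpd.1 x x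
    _ ≤ (R *ᵥ x) ⬝ᵥ B *ᵥ (R *ᵥ x) := h2
    _ = x ⬝ᵥ (R * B * R) *ᵥ x := (dot_conj hRpd.1 x x).symm
  have key := inv_form_le_one hCpd hCge (R *ᵥ v)
  haveI := hRpd.isUnit.invertible
  have hBinv : R * (R * B * R)⁻¹ * R = B⁻¹ := by
    rw [Matrix.mul_inv_rev, Matrix.mul_inv_rev, ← Matrix.mul_assoc, ← Matrix.mul_assoc,
      Matrix.mul_inv_of_invertible, Matrix.one_mul, Matrix.mul_assoc,
      Matrix.inv_mul_of_invertible, Matrix.mul_one]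
  calc v ⬝ᵥ B⁻¹ *ᵥ v = v ⬝ᵥ (R * (R * B * R)⁻¹ * R) *ᵥ v := by rw [hBinv]
  _ = (R *ᵥ v) ⬝ᵥ (R * B * R)⁻¹ *ᵥ (R *ᵥ v) := dot_conj hRpd.1 v v
  _ ≤ (R *ᵥ v) ⬝ᵥ (R *ᵥ v) := key
  _ = v ⬝ᵥ A⁻¹ *ᵥ v := by rw [← dot_symm hRpd.1, mulVec_mulVec, hR2]

end Aux

/-- If `(1−γ)Σ_P ⪯ Σ̂_P ⪯ (1+γ)Σ_P` with `Σ_P ≻ 0` and `γ ∈ [0, 1/2]`, then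
`vᵀ (I − Σ_P^{1/2} Σ̂_P⁻¹ Σ_P^{1/2})² v ≤ 10γ‖v‖₂²` for every `v`. -/
theorem sandwiched_identity_deviation_bound {d : ℕ}
    (SigP SigHat : Matrix (Fin d) (Fin d) ℝ) (hSig : SigP.PosDef)
    (hSigHat : SigHat.IsSymm)
    (γ : ℝ) (hγ : γ ∈ Set.Icc (0:ℝ) (1/2))
    (hlow : (SigHat - (1 - γ) • SigP).PosSemidef)
    (hupp : ((1 + γ) • SigP - SigHat).PosSemidef)
    (v : Fin d → ℝ) :
    v ⬝ᵥ (((1 : Matrix (Fin d) (Fin d) ℝ)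
        - hSig.posSemidef.sqrt * SigHat⁻¹ * hSig.posSemidef.sqrt) ^ 2 *ᵥ v)
      ≤ 10 * γ * (v ⬝ᵥ v) := by
  obtain ⟨hγ0, hγ2⟩ := hγ
  have h1γlow : (0:ℝ) < 1 - γ := by linarith
  have h1γupp : (0:ℝ) < 1 + γ := by linarith
  -- Σ̂ is positive definite
  have hP1 : ((1 - γ) • SigP).PosDef := posDef_smul hSig h1γlow
  have hP2 : ((1 + γ) • SigP).PosDef := posDef_smul hSig h1γupp
  have hHat : SigHat.PosDef := by
    have h := Matrix.PosDef.posSemidef_add hlow hP1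
    rwa [sub_add_cancel] at h
  -- square root of Σ_P
  set S := hSig.posSemidef.sqrt with hSdef
  have hSpd : S.PosDef := sqrt_posDef hSig
  have hS2 : S * S = SigP := hSig.posSemidef.sqrt_mul_self
  have hSPinv : S * SigP⁻¹ * S = 1 := by
    refine conj_sqrt_inv hSig.inv ?_ hSpd.isUnit
    rw [Matrix.nonsing_inv_nonsing_inv _ ((isUnit_iff_isUnit_det _).mp hSig.isUnit), hS2]
  set M := S * SigHat⁻¹ * S with hMdef
  have hMpd : M.PosDef := posDef_conj hHat.inv hSpd
  -- scalar inverses of the smul matrices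
  haveI : Invertible (1 - γ) := invertibleOfNonzero h1γlow.ne'
  haveI : Invertible (1 + γ) := invertibleOfNonzero h1γupp.ne'
  have hinv1 : ((1 - γ) • SigP)⁻¹ = (1 - γ)⁻¹ • SigP⁻¹ := by
    rw [Matrix.inv_smul (k := 1 - γ) (A := SigP) ((isUnit_iff_isUnit_det _).mp hSig.isUnit), invOf_eq_inv]
  have hinv2 : ((1 + γ) • SigP)⁻¹ = (1 + γ)⁻¹ • SigP⁻¹ := by
    rw [Matrix.inv_smul (k := 1 + γ) (A := SigP) ((isUnit_iff_isUnit_det _).mp hSig.isUnit), invOf_eq_inv]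
  -- quadratic form bounds on M
  have hMform : ∀ w : Fin d → ℝ,
      (1 + γ)⁻¹ * (w ⬝ᵥ w) ≤ w ⬝ᵥ M *ᵥ w ∧ w ⬝ᵥ M *ᵥ w ≤ (1 - γ)⁻¹ * (w ⬝ᵥ w) := by
    intro w
    have hMw : w ⬝ᵥ M *ᵥ w = (S *ᵥ w) ⬝ᵥ SigHat⁻¹ *ᵥ (S *ᵥ w) := dot_conj hSpd.1 w w
    have hww : (S *ᵥ w) ⬝ᵥ SigP⁻¹ *ᵥ (S *ᵥ w) = w ⬝ᵥ w := by
      rw [← dot_conj hSpd.1, hSPinv, one_mulVec]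
    constructor
    · have h2 := inv_form_mono hHat hP2 hupp (S *ᵥ w)
      rw [hinv2, smul_mulVec, dotProduct_smul, smul_eq_mul, hww] at h2
      rw [hMw]; exact h2
    · have h2 := inv_form_mono hP1 hHat hlow (S *ᵥ w)
      rw [hinv1, smul_mulVec, dotProduct_smul, smul_eq_mul, hww] at h2
      rw [hMw]; exact h2
  -- the shifted matrix A = 2γ I - (I - M) is PSD and ≼ 4γ I
  set A := (2 * γ) • (1 : Matrix (Fin d) (Fin d) ℝ)
      - ((1 : Matrix (Fin d) (Fin d) ℝ) - M) with hAdef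
  have hXA : (1 : Matrix (Fin d) (Fin d) ℝ) - M
      = (2 * γ) • (1 : Matrix (Fin d) (Fin d) ℝ) - A := by
    rw [hAdef, sub_sub_cancel]
  have hAform : ∀ x : Fin d → ℝ, x ⬝ᵥ A *ᵥ x
      = (2 * γ - 1) * (x ⬝ᵥ x) + x ⬝ᵥ M *ᵥ x := by
    intro x
    rw [hAdef, sub_mulVec, sub_mulVec, dotProduct_sub, dotProduct_sub,
      smul_mulVec, one_mulVec, dotProduct_smul, smul_eq_mul]
    ring
  have hApsd : A.PosSemidef := by
    refine PosSemidef.of_dotProduct_mulVec_nonneg ((herm_smul isHermitian_one (2 * γ)).sub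
      (isHermitian_one.sub hMpd.1)) (fun x => ?_)
    rw [star_trivial, hAform]
    have h1 := (hMform x).1
    have hxx : 0 ≤ x ⬝ᵥ x := by
      have := psd_form (Matrix.PosSemidef.zero (n := Fin d) (R := ℝ)) x
      simpa using dotProduct_star_self_nonneg x
    have hkey : (0:ℝ) ≤ (2 * γ - 1) + (1 + γ)⁻¹ := by
      have hmul : (1 + γ)⁻¹ * (1 + γ) = 1 := inv_mul_cancel₀ h1γupp.ne'
      have hnn : 0 ≤ (1 + γ)⁻¹ := le_of_lt (inv_pos.mpr h1γupp)
      nlinarith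
    nlinarith
  have hAup : ∀ x : Fin d → ℝ, x ⬝ᵥ A *ᵥ x ≤ (4 * γ) * (x ⬝ᵥ x) := by
    intro x
    rw [hAform]
    have h1 := (hMform x).2
    have hxx : 0 ≤ x ⬝ᵥ x := by simpa using dotProduct_star_self_nonneg x
    have hkey : (2 * γ - 1) + (1 - γ)⁻¹ ≤ 4 * γ := by
      have hmul : (1 - γ)⁻¹ * (1 - γ) = 1 := inv_mul_cancel₀ h1γlow.ne'
      have hnn : 0 ≤ (1 - γ)⁻¹ := le_of_lt (inv_pos.mpr h1γlow)
      nlinarith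
    nlinarith
  -- square root of A and the key bound ‖Ax‖² ≤ 4γ xᵀAx
  set R := hApsd.sqrt with hRdef
  have hRpsd : R.PosSemidef := hApsd.posSemidef_sqrt
  have hR2 : R * R = A := hApsd.sqrt_mul_self
  have hRnorm : ∀ x : Fin d → ℝ, (R *ᵥ x) ⬝ᵥ (R *ᵥ x) = x ⬝ᵥ A *ᵥ x := by
    intro x
    rw [← dot_symm hRpsd.1, mulVec_mulVec, hR2]
  have hAv : (A *ᵥ v) ⬝ᵥ (A *ᵥ v) ≤ (4 * γ) * (v ⬝ᵥ A *ᵥ v) := by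
    have e : A *ᵥ v = R *ᵥ (R *ᵥ v) := by rw [mulVec_mulVec, hR2]
    have h1 : (A *ᵥ v) ⬝ᵥ (A *ᵥ v) = (R *ᵥ v) ⬝ᵥ A *ᵥ (R *ᵥ v) := by
      conv_lhs => rw [e]
      rw [hRnorm (R *ᵥ v)]
    rw [h1]
    calc (R *ᵥ v) ⬝ᵥ A *ᵥ (R *ᵥ v) ≤ (4 * γ) * ((R *ᵥ v) ⬝ᵥ (R *ᵥ v)) := hAup _
    _ = (4 * γ) * (v ⬝ᵥ A *ᵥ v) := by rw [hRnorm]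
  -- expand the goal
  have hXherm : ((1 : Matrix (Fin d) (Fin d) ℝ) - M).IsHermitian :=
    isHermitian_one.sub hMpd.1
  have hgoal : v ⬝ᵥ ((1 : Matrix (Fin d) (Fin d) ℝ) - M) ^ 2 *ᵥ v
      = (((1 : Matrix (Fin d) (Fin d) ℝ) - M) *ᵥ v) ⬝ᵥ
        (((1 : Matrix (Fin d) (Fin d) ℝ) - M) *ᵥ v) := by
    rw [pow_two, ← mulVec_mulVec, dot_symm hXherm]
  rw [hgoal, hXA, sub_mulVec, smul_mulVec, one_mulVec]
  have hexp : ((2 * γ) • v - A *ᵥ v) ⬝ᵥ ((2 * γ) • v - A *ᵥ v)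
      = (2 * γ) * (2 * γ) * (v ⬝ᵥ v) - 2 * (2 * γ) * (v ⬝ᵥ A *ᵥ v)
        + (A *ᵥ v) ⬝ᵥ (A *ᵥ v) := by
    rw [dotProduct_sub, sub_dotProduct, sub_dotProduct, smul_dotProduct,
      dotProduct_smul, smul_dotProduct, dotProduct_smul, smul_eq_mul, smul_eq_mul,
      smul_eq_mul, smul_eq_mul]
    have hcomm : (A *ᵥ v) ⬝ᵥ v = v ⬝ᵥ A *ᵥ v := (dot_symm hApsd.1 v v).symm
    rw [hcomm]
    ring
  rw [hexp]
  have hvv : 0 ≤ v ⬝ᵥ v := by simpa using dotProduct_star_self_nonneg v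
  have hAvv : 0 ≤ v ⬝ᵥ A *ᵥ v := psd_form hApsd v
  nlinarith [hAv, mul_nonneg (mul_nonneg hγ0 hvv) (by linarith : (0:ℝ) ≤ 1 - 2 * γ),
    mul_nonneg hγ0 hvv]
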